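/- arXiv:2201.04181 — 7 statements merged into one kernel-verified Lean document; each statement's English description precedes it below -/
import Mathlib

section
/- The number of derangements of [n] equals the number of permutations of [n] having exactly one fixed point among the first n-1 points: d_n = c(n, n-1, 1). -/
/-- `c n k d` : number of permutations of `{1,...,n}` (modeled as `Fin n`)
with exactly `d` fixed points among the first `k` points. -/
noncomputable def c (n k d : ℕ) : ℕ :=
  Nat.card {α : Equiv.Perm (Fin n) //
    (Finset.univ.filter (fun i : Fin n => (i : ℕ) < k ∧ α i = i)).card = d}

/-- `p n k d = c n k d / n!`, the probability that a uniformly random permutation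
of `[n]` has exactly `d` fixed points among the first `k` points. -/
noncomputable def p (n k d : ℕ) : ℝ := (c n k d : ℝ) / (Nat.factorial n)

/-- `f n k d = c (n-1) k d / c n k d`, the conditional probability that the
`(k+1)`-st point is fixed given exactly `d` fixed points among the first `k` points. -/
noncomputable def f (n k d : ℕ) : ℝ := (c (n - 1) k d : ℝ) / (c n k d)

theorem stmt3 (n : ℕ) (hn : 1 ≤ n) :
    c n n 0 = c n (n - 1) 1 := by
  classical
  have hLlt : n - 1 < n := by omega
  set L : Fin n := ⟨n - 1, hLlt⟩ with hLdef
  have hLval : (L : ℕ) = n - 1 := rfl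
  have hA : ∀ α : Equiv.Perm (Fin n),
      (Finset.univ.filter (fun i : Fin n => (i : ℕ) < n ∧ α i = i)).card = 0 ↔
        ∀ i, α i ≠ i := by
    intro α
    rw [Finset.card_eq_zero, Finset.filter_eq_empty_iff]
    simp [Fin.is_lt]
  have key : ∀ α : Equiv.Perm (Fin n), (∀ i, α i ≠ i) →
      Finset.univ.filter
        (fun i : Fin n => (i : ℕ) < n - 1 ∧ (α * Equiv.swap (α L) L) i = i) = {α L} := by
    intro α hα
    have hjL : α L ≠ L := hα L
    ext i
    rw [Finset.mem_filter, Finset.mem_singleton]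
    simp only [Finset.mem_univ, true_and, Equiv.Perm.mul_apply]
    constructor
    · rintro ⟨hi1, hi2⟩
      by_contra hij
      have hiL : i ≠ L := by
        intro h
        rw [h, hLval] at hi1
        omega
      rw [Equiv.swap_apply_of_ne_of_ne hij hiL] at hi2
      exact hα i hi2
    · intro h
      subst h
      refine ⟨?_, ?_⟩
      · have h1 := (α L).is_lt
        have h2 : ((α L : Fin n) : ℕ) ≠ n - 1 := by
          intro h
          exact hjL (Fin.ext (by rw [h, hLval]))
        omega
      · rw [Equiv.swap_apply_left]
  unfold c
  refine Nat.card_eq_of_bijective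
    (fun α => ⟨α.1 * Equiv.swap (α.1 L) L, by
      rw [key α.1 ((hA α.1).mp α.2)]; simp⟩) ⟨?_, ?_⟩
  · rintro ⟨α, hα⟩ ⟨β, hβ⟩ hfe
    have hαd := (hA α).mp hα
    have hβd := (hA β).mp hβ
    have heq : α * Equiv.swap (α L) L = β * Equiv.swap (β L) L :=
      congrArg Subtype.val hfe
    have hsing : ({α L} : Finset (Fin n)) = {β L} := by
      rw [← key α hαd, ← key β hβd, heq]
    have hv : α L = β L := by
      simpa using Finset.singleton_injective hsing
    apply Subtype.ext
    have := heq
    rw [hv] at this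
    exact mul_right_cancel this
  · rintro ⟨β, hβ⟩
    obtain ⟨j, hj⟩ := Finset.card_eq_one.mp hβ
    have hjmem : j ∈ Finset.univ.filter
        (fun i : Fin n => (i : ℕ) < n - 1 ∧ β i = i) := by
      rw [hj]; exact Finset.mem_singleton_self j
    rw [Finset.mem_filter] at hjmem
    obtain ⟨-, hjlt, hjfix⟩ := hjmem
    have hjL : j ≠ L := by
      intro h
      rw [h, hLval] at hjlt
      omega
    set α : Equiv.Perm (Fin n) := β * Equiv.swap j L with hαdef
    have hαd : ∀ i, α i ≠ i := by
      intro i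
      rw [hαdef, Equiv.Perm.mul_apply]
      rcases eq_or_ne i j with rfl | hij
      · rw [Equiv.swap_apply_left]
        intro h
        have : L = i := β.injective (by rw [h, hjfix])
        exact hjL this.symm
      · rcases eq_or_ne i L with rfl | hiL
        · rw [Equiv.swap_apply_right, hjfix]
          exact hjL
        · rw [Equiv.swap_apply_of_ne_of_ne hij hiL]
          intro h
          have hilt : (i : ℕ) < n - 1 := by
            have h1 := i.is_lt
            have h2 : (i : ℕ) ≠ n - 1 := by
              intro hh
              exact hiL (Fin.ext (by rw [hh, hLval]))
            omega
          have : i ∈ Finset.univ.filter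
              (fun i : Fin n => (i : ℕ) < n - 1 ∧ β i = i) := by
            rw [Finset.mem_filter]
            exact ⟨Finset.mem_univ i, hilt, h⟩
          rw [hj, Finset.mem_singleton] at this
          exact hij this
    refine ⟨⟨α, (hA α).mpr hαd⟩, ?_⟩
    apply Subtype.ext
    have hαL : α L = j := by
      rw [hαdef, Equiv.Perm.mul_apply, Equiv.swap_apply_right, hjfix]
    show α * Equiv.swap (α L) L = β
    rw [hαL, hαdef, mul_assoc, Equiv.swap_mul_self, mul_one]
end

section
/- The number of permutations of [n] with exactly one fixed point among the first n-1 points equals (n-1) times the number of permutations of [n-1] with no fixed points among the first n-2 points: c(n, n-1, 1) = (n-1) * c(n-1, n-2, 0). -/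
open Equiv Finset

private def Phi (m : ℕ) (j : Fin (m+1)) (β : Perm (Fin (m+1))) : Perm (Fin (m+2)) :=
  ((finSuccEquiv' j.castSucc).symm.permCongr) β.optionCongr

private lemma Phi_fixed {m : ℕ} (j : Fin (m+1)) (β : Perm (Fin (m+1))) :
    Phi m j β j.castSucc = j.castSucc := by
  simp [Phi, Equiv.permCongr_apply, finSuccEquiv'_at, finSuccEquiv'_symm_none]

private lemma Phi_succAbove {m : ℕ} (j : Fin (m+1)) (β : Perm (Fin (m+1))) (i : Fin (m+1)) :
    Phi m j β (j.castSucc.succAbove i) = j.castSucc.succAbove (β i) := by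
  simp [Phi, Equiv.permCongr_apply, finSuccEquiv'_succAbove, finSuccEquiv'_symm_some]

private lemma coe_succAbove_lt {m : ℕ} (j : Fin (m+1)) (i : Fin (m+1)) :
    ((j.castSucc.succAbove i : Fin (m+2)) : ℕ) < m + 1 ↔ (i : ℕ) < m := by
  rcases lt_or_ge i.castSucc j.castSucc with h | h
  · rw [Fin.succAbove_of_castSucc_lt _ _ h]
    have h1 : (i : ℕ) < (j : ℕ) := h
    have h2 : (j : ℕ) ≤ m := Nat.lt_succ_iff.mp j.isLt
    simp only [Fin.coe_castSucc]
    omega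
  · rw [Fin.succAbove_of_le_castSucc _ _ h]
    simp [Fin.val_succ]

private lemma filter_Phi {m : ℕ} (j : Fin (m+1)) (β : Perm (Fin (m+1))) :
    (Finset.univ.filter (fun i : Fin (m+2) => (i : ℕ) < m + 1 ∧ Phi m j β i = i)).card
      = (Finset.univ.filter (fun i : Fin (m+1) => (i : ℕ) < m ∧ β i = i)).card + 1 := by
  have hset : (Finset.univ.filter (fun i : Fin (m+2) => (i : ℕ) < m + 1 ∧ Phi m j β i = i))
      = insert j.castSucc
        ((Finset.univ.filter (fun i : Fin (m+1) => (i : ℕ) < m ∧ β i = i)).image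
          j.castSucc.succAbove) := by
    ext x
    simp only [Finset.mem_filter, Finset.mem_univ, true_and, Finset.mem_insert,
      Finset.mem_image]
    rcases eq_or_ne x j.castSucc with rfl | hx
    · simp only [true_or, iff_true]
      refine ⟨?_, Phi_fixed j β⟩
      simpa using j.isLt
    · obtain ⟨i, rfl⟩ := Fin.exists_succAbove_eq hx
      constructor
      · rintro ⟨h1, h2⟩
        rw [Phi_succAbove] at h2
        exact Or.inr ⟨i, ⟨(coe_succAbove_lt j i).mp h1,
          Fin.succAbove_right_injective h2⟩, rfl⟩
      · rintro (h | ⟨i', ⟨h1, h2⟩, h3⟩)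
        · exact absurd h (Fin.succAbove_ne _ _)
        · obtain rfl : i = i' := (Fin.succAbove_right_injective h3).symm
          exact ⟨(coe_succAbove_lt j _).mpr h1, by rw [Phi_succAbove, h2]⟩
  rw [hset, Finset.card_insert_of_notMem, Finset.card_image_of_injective _
    Fin.succAbove_right_injective]
  simp only [Finset.mem_image, not_exists]
  rintro y ⟨-, h⟩
  exact Fin.succAbove_ne _ _ h

private lemma key (m : ℕ) : c (m+2) (m+1) 1 = (m+1) * c (m+1) m 0 := by
  rw [c, c]
  set A := {α : Perm (Fin (m+2)) //
    (Finset.univ.filter (fun i : Fin (m+2) => (i : ℕ) < m + 1 ∧ α i = i)).card = 1}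
  set B := {β : Perm (Fin (m+1)) //
    (Finset.univ.filter (fun i : Fin (m+1) => (i : ℕ) < m ∧ β i = i)).card = 0}
  have hΨ : Function.Bijective (fun x : Fin (m+1) × B =>
      (⟨Phi m x.1 x.2.1, by rw [filter_Phi, x.2.2]⟩ : A)) := by
    constructor
    · rintro ⟨j, β, hβ⟩ ⟨j', β', hβ'⟩ h
      simp only [Subtype.mk.injEq] at h
      have hfix : Phi m j' β' j.castSucc = j.castSucc := by
        rw [← h]; exact Phi_fixed j β
      have hj : j = j' := by
        by_contra hne
        have hne' : (j.castSucc : Fin (m+2)) ≠ j'.castSucc := by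
          simpa [Fin.castSucc_inj] using hne
        obtain ⟨i, hi⟩ := Fin.exists_succAbove_eq hne'
        rw [← hi, Phi_succAbove] at hfix
        have hii : β' i = i := Fin.succAbove_right_injective hfix
        have hmem : i ∈ Finset.univ.filter
            (fun i : Fin (m+1) => (i : ℕ) < m ∧ β' i = i) := by
          simp only [Finset.mem_filter, Finset.mem_univ, true_and]
          refine ⟨?_, hii⟩
          rw [← coe_succAbove_lt j' i, hi]
          simpa using j.isLt
        rw [Finset.card_eq_zero] at hβ'
        simp [hβ'] at hmem
      subst hj
      have hβeq : β = β' := by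
        ext i
        have := congrArg (fun σ : Perm (Fin (m+2)) => σ (j.castSucc.succAbove i)) h
        simp only [Phi_succAbove] at this
        exact congrArg Fin.val (Fin.succAbove_right_injective this)
      simp [hβeq]
    · rintro ⟨α, hα⟩
      obtain ⟨x0, hx0⟩ := Finset.card_eq_one.mp hα
      have hx0mem : x0 ∈ Finset.univ.filter
          (fun i : Fin (m+2) => (i : ℕ) < m + 1 ∧ α i = i) := hx0 ▸ Finset.mem_singleton_self x0
      simp only [Finset.mem_filter, Finset.mem_univ, true_and] at hx0mem
      obtain ⟨hlt, hfix⟩ := hx0mem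
      set j : Fin (m+1) := ⟨(x0 : ℕ), hlt⟩ with hj
      have hcast : j.castSucc = x0 := by ext; simp [hj]
      set σ : Perm (Option (Fin (m+1))) := (finSuccEquiv' j.castSucc).permCongr α with hσ
      have hσnone : σ none = none := by
        simp [hσ, Equiv.permCongr_apply, hcast, finSuccEquiv'_symm_none, hfix,
          finSuccEquiv'_at]
      set β : Perm (Fin (m+1)) := Equiv.removeNone σ with hβ
      have hoption : Equiv.optionCongr β = σ := by
        ext x
        cases x with
        | none => simp [hσnone]
        | some y =>
          have hy : ∃ y', σ (some y) = some y' := by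
            cases hc : σ (some y) with
            | none =>
              exact absurd (σ.injective (hc.trans hσnone.symm)) (by simp)
            | some y' => exact ⟨y', rfl⟩
          have := Equiv.removeNone_some σ hy
          simp only [Equiv.optionCongr_apply, Option.map_some]
          rw [hβ, this]
      have hPhi : Phi m j β = α := by
        rw [Phi, hoption, hσ]
        ext x
        simp [Equiv.permCongr_apply]
      refine ⟨⟨j, ⟨β, ?_⟩⟩, ?_⟩
      · have := filter_Phi j β
        rw [hPhi, hα] at this
        omega
      · simp only [Subtype.mk.injEq]
        exact hPhi
  have hcard := Nat.card_eq_of_bijective _ hΨ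
  rw [Nat.card_prod, Nat.card_eq_fintype_card (α := Fin (m+1)), Fintype.card_fin] at hcard
  exact hcard.symm

private lemma c_zero_k (n d : ℕ) (hd : d ≠ 0) : c n 0 d = 0 := by
  rw [c]
  have : IsEmpty {α : Equiv.Perm (Fin n) //
      (Finset.univ.filter (fun i : Fin n => (i : ℕ) < 0 ∧ α i = i)).card = d} := by
    constructor
    rintro ⟨α, hα⟩
    apply hd
    rw [← hα]
    simp
  exact Nat.card_of_isEmpty

theorem stmt4 (n : ℕ) :
    c n (n - 1) 1 = (n - 1) * c (n - 1) (n - 2) 0 := by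
  match n with
  | 0 => simp [c_zero_k 0 1 one_ne_zero]
  | 1 => simp [c_zero_k 1 1 one_ne_zero]
  | (m+2) =>
    have : m + 2 - 1 = m + 1 := rfl
    have : m + 2 - 2 = m := rfl
    simpa using key m
end

section
/- Let n ≥ 2, 1 ≤ k ≤ n-1, 0 ≤ d ≤ k, and let i, j ∈ [n] with k < i and k < j. Then the number of permutations α of [n] with exactly d fixed points among the first k points and α(i) = j equals c(n-1, k, d). -/
namespace Stmt6Aux

open Equiv Finset

lemma optionCongr_removeNone {α : Type*} (g : Option α ≃ Option α) (h : g none = none) :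
    Equiv.optionCongr (Equiv.removeNone g) = g := by
  apply Equiv.ext
  intro x
  cases x with
  | none => simpa using h.symm
  | some x =>
    have hx : ∃ x', g (some x) = some x' := by
      cases hfx : g (some x) with
      | none =>
        exact absurd (g.injective (hfx.trans h.symm)) (by simp)
      | some y => exact ⟨y, rfl⟩
    simpa using Equiv.removeNone_some g hx

variable {m : ℕ}

/-- extend a permutation of `Fin m` to a permutation of `Fin (m+1)` sending `i` to `j`. -/
def G (i j : Fin (m + 1)) (γ : Equiv.Perm (Fin m)) : Equiv.Perm (Fin (m + 1)) :=
  Equiv.swap i j * ((finSuccEquiv' i).symm.permCongr γ.optionCongr)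

def H (i j : Fin (m + 1)) (α : Equiv.Perm (Fin (m + 1))) : Equiv.Perm (Fin m) :=
  Equiv.removeNone ((finSuccEquiv' i).permCongr (Equiv.swap i j * α))

lemma G_apply_i (i j : Fin (m + 1)) (γ : Equiv.Perm (Fin m)) : G i j γ i = j := by
  simp [G, Equiv.Perm.mul_apply, finSuccEquiv'_at, finSuccEquiv'_symm_none,
    Equiv.swap_apply_left]

lemma H_G (i j : Fin (m + 1)) (γ : Equiv.Perm (Fin m)) : H i j (G i j γ) = γ := by
  unfold H G
  rw [← mul_assoc, Equiv.swap_mul_self, one_mul, ← Equiv.permCongr_symm,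
    Equiv.apply_symm_apply, Equiv.removeNone_optionCongr]

lemma G_H (i j : Fin (m + 1)) (α : Equiv.Perm (Fin (m + 1))) (hα : α i = j) :
    G i j (H i j α) = α := by
  unfold H G
  have hβ : (Equiv.swap i j * α) i = i := by
    simp [Equiv.Perm.mul_apply, hα, Equiv.swap_apply_right]
  have hnone : ((finSuccEquiv' i).permCongr (Equiv.swap i j * α)) none = none := by
    simp [Equiv.permCongr_apply, finSuccEquiv'_symm_none, hβ, hα, finSuccEquiv'_at]
  rw [optionCongr_removeNone _ hnone, ← Equiv.permCongr_symm, Equiv.symm_apply_apply,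
    ← mul_assoc, Equiv.swap_mul_self, one_mul]

lemma G_fix_iff {k : ℕ} {i j : Fin (m + 1)} (hi : k ≤ (i : ℕ)) (hj : k ≤ (j : ℕ))
    (γ : Equiv.Perm (Fin m)) (x : Fin m) (hx : (x : ℕ) < k) :
    G i j γ (Fin.castSucc x) = Fin.castSucc x ↔ γ x = x := by
  have hxi : Fin.castSucc x < i := by
    rw [Fin.lt_def]; simpa using lt_of_lt_of_le hx hi
  have h1 : G i j γ (Fin.castSucc x) = Equiv.swap i j (i.succAbove (γ x)) := by
    simp [G, Equiv.Perm.mul_apply, Equiv.permCongr_apply, finSuccEquiv'_below hxi,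
      finSuccEquiv'_symm_some]
  have hne_i : Fin.castSucc x ≠ i := ne_of_lt hxi
  have hne_j : Fin.castSucc x ≠ j := by
    refine Fin.ne_of_val_ne ?_
    simpa using ne_of_lt (lt_of_lt_of_le hx hj)
  rw [h1, ← Equiv.symm_swap, Equiv.symm_apply_eq,
    Equiv.swap_apply_of_ne_of_ne hne_i hne_j,
    ← Fin.succAbove_of_castSucc_lt _ _ hxi,
    (Fin.succAbove_right_injective (p := i)).eq_iff]

lemma card_filter_G {k : ℕ} {i j : Fin (m + 1)} (hkm : k ≤ m) (hi : k ≤ (i : ℕ))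
    (hj : k ≤ (j : ℕ)) (γ : Equiv.Perm (Fin m)) :
    (Finset.univ.filter (fun x : Fin (m + 1) => (x : ℕ) < k ∧ G i j γ x = x)).card =
      (Finset.univ.filter (fun x : Fin m => (x : ℕ) < k ∧ γ x = x)).card := by
  rw [← Finset.card_map ⟨Fin.castSucc, Fin.castSucc_injective m⟩]
  congr 1
  ext y
  simp only [Finset.mem_map, Finset.mem_filter, Finset.mem_univ, true_and,
    Function.Embedding.coeFn_mk]
  constructor
  · rintro ⟨hy, hfix⟩
    have hym : (y : ℕ) < m := lt_of_lt_of_le hy hkm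
    refine ⟨⟨(y : ℕ), hym⟩, ⟨hy, ?_⟩, Fin.ext (by simp)⟩
    have hcast : Fin.castSucc (⟨(y : ℕ), hym⟩ : Fin m) = y := Fin.ext (by simp)
    rw [← (G_fix_iff hi hj γ _ hy), hcast]
    exact hfix
  · rintro ⟨x, ⟨hx, hfix⟩, rfl⟩
    exact ⟨by simpa using hx, (G_fix_iff hi hj γ x hx).2 hfix⟩

end Stmt6Aux

theorem stmt6 (n k d : ℕ) (hn : 2 ≤ n) (hk1 : 1 ≤ k) (hk : k ≤ n - 1)
    (hd : d ≤ k) (i j : Fin n) (hi : k ≤ (i : ℕ)) (hj : k ≤ (j : ℕ)) :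
    Nat.card {α : Equiv.Perm (Fin n) //
        (Finset.univ.filter (fun x : Fin n => (x : ℕ) < k ∧ α x = x)).card = d ∧ α i = j}
      = c (n - 1) k d := by
  obtain ⟨m, rfl⟩ : ∃ m, n = m + 1 := ⟨n - 1, (Nat.succ_pred_eq_of_pos (by omega)).symm⟩
  have hkm : k ≤ m := by omega
  have hmn : m + 1 - 1 = m := rfl
  rw [hmn, c]
  refine Nat.card_congr (Equiv.symm ?_)
  exact
    { toFun := fun γ => ⟨Stmt6Aux.G i j γ.1,
        by rw [Stmt6Aux.card_filter_G hkm hi hj]; exact γ.2,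
        Stmt6Aux.G_apply_i i j γ.1⟩
      invFun := fun α => ⟨Stmt6Aux.H i j α.1, by
        have := Stmt6Aux.card_filter_G hkm hi hj (Stmt6Aux.H i j α.1)
        rw [Stmt6Aux.G_H i j α.1 α.2.2] at this
        rw [← this]; exact α.2.1⟩
      left_inv := fun γ => Subtype.ext (Stmt6Aux.H_G i j γ.1)
      right_inv := fun α => Subtype.ext (Stmt6Aux.G_H i j α.1 α.2.2) }
end

section
/- Let n ≥ 2, 1 ≤ k ≤ n-1, 0 ≤ d ≤ k, and let i, j ∈ [n] with i ≤ k < j. Then the number of permutations α of [n] with exactly d fixed points among the first k points and α(i) = j equals c(n-1, k-1, d). -/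
theorem stmt7 (n k d : ℕ) (hn : 2 ≤ n) (hk1 : 1 ≤ k) (hk : k ≤ n - 1)
    (hd : d ≤ k) (i j : Fin n) (hi : (i : ℕ) < k) (hj : k ≤ (j : ℕ)) :
    Nat.card {α : Equiv.Perm (Fin n) //
        (Finset.univ.filter (fun x : Fin n => (x : ℕ) < k ∧ α x = x)).card = d ∧ α i = j}
      = c (n - 1) (k - 1) d := by
  obtain ⟨m, rfl⟩ : ∃ m, n = m + 1 := ⟨n - 1, by omega⟩
  have hij : i ≠ j := fun h => by rw [h] at hi; omega
  set φ : Fin m ≃ {x : Fin (m + 1) // x ≠ i} := finSuccAboveEquiv i with hφ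
  have hED : ∀ (β : Equiv.Perm (Fin m)) (y : Fin m),
      (β.extendDomain φ) (i.succAbove y) = i.succAbove (β y) := by
    intro β y
    have := Equiv.Perm.extendDomain_apply_image β φ y
    rw [hφ] at this
    simpa [finSuccAboveEquiv_apply, ← Subtype.ext_iff] using this
  have hEDi : ∀ β : Equiv.Perm (Fin m), (β.extendDomain φ) i = i := fun β =>
    Equiv.Perm.extendDomain_apply_not_subtype _ _ (by simp)
  have hsa : ∀ y : Fin m, ((i.succAbove y : Fin (m+1)) : ℕ) < k ↔ (y : ℕ) < k - 1 := by
    intro y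
    rcases lt_or_ge (Fin.castSucc y) i with h | h
    · rw [Fin.succAbove_of_castSucc_lt _ _ h]
      have : (y : ℕ) < (i : ℕ) := h
      simp only [Fin.coe_castSucc]
      omega
    · rw [Fin.succAbove_of_le_castSucc _ _ h]
      have : (i : ℕ) ≤ (y : ℕ) := h
      simp only [Fin.val_succ]
      omega
  have key : ∀ β : Equiv.Perm (Fin m),
      (Finset.univ.filter (fun x : Fin (m+1) =>
          (x : ℕ) < k ∧ (Equiv.swap i j * β.extendDomain φ) x = x)).card
      = (Finset.univ.filter (fun y : Fin m => (y : ℕ) < k - 1 ∧ β y = y)).card := by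
    intro β
    have hset : (Finset.univ.filter (fun x : Fin (m+1) =>
          (x : ℕ) < k ∧ (Equiv.swap i j * β.extendDomain φ) x = x))
        = (Finset.univ.filter (fun y : Fin m => (y : ℕ) < k - 1 ∧ β y = y)).map
            (Fin.succAboveEmb i) := by
      ext x
      simp only [Finset.mem_map, Finset.mem_filter, Finset.mem_univ, true_and,
        Fin.succAboveEmb, Function.Embedding.coeFn_mk]
      constructor
      · rintro ⟨hxk, hxfix⟩
        have hxi : x ≠ i := by
          intro h; subst h
          rw [Equiv.Perm.mul_apply, hEDi, Equiv.swap_apply_left] at hxfix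
          exact hij hxfix.symm
        obtain ⟨y, rfl⟩ := Fin.exists_succAbove_eq hxi
        rw [Equiv.Perm.mul_apply, hED] at hxfix
        have hβy : β y = y := by
          by_contra hne
          rcases eq_or_ne (i.succAbove (β y)) i with h1 | h1
          · exact (Fin.succAbove_ne i (β y)) h1
          rcases eq_or_ne (i.succAbove (β y)) j with h2 | h2
          · rw [h2, Equiv.swap_apply_right] at hxfix
            rw [← hxfix] at hxk; omega
          · rw [Equiv.swap_apply_of_ne_of_ne h1 h2] at hxfix
            exact hne (Fin.succAbove_right_injective hxfix)
        exact ⟨y, ⟨(hsa y).mp hxk, hβy⟩, rfl⟩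
      · rintro ⟨y, ⟨hy1, hy2⟩, rfl⟩
        have hlt := (hsa y).mpr hy1
        refine ⟨hlt, ?_⟩
        have hj' : i.succAbove y ≠ j := fun h => by rw [h] at hlt; omega
        rw [Equiv.Perm.mul_apply, hED, hy2,
          Equiv.swap_apply_of_ne_of_ne (Fin.succAbove_ne i y) hj']
    rw [hset, Finset.card_map]
  let F : {β : Equiv.Perm (Fin m) //
        (Finset.univ.filter (fun y : Fin m => (y : ℕ) < k - 1 ∧ β y = y)).card = d}
      → {α : Equiv.Perm (Fin (m+1)) //
        (Finset.univ.filter (fun x : Fin (m+1) => (x : ℕ) < k ∧ α x = x)).card = d ∧ α i = j} :=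
    fun β => ⟨Equiv.swap i j * β.1.extendDomain φ,
      by rw [key]; exact β.2,
      by rw [Equiv.Perm.mul_apply, hEDi, Equiv.swap_apply_left]⟩
  have hFbij : Function.Bijective F := by
    constructor
    · rintro ⟨β1, h1⟩ ⟨β2, h2⟩ hF
      simp only [F, Subtype.mk.injEq, mul_right_inj] at hF
      refine Subtype.ext (Equiv.ext fun y => ?_)
      have := congrArg (fun σ : Equiv.Perm (Fin (m+1)) => σ (i.succAbove y)) hF
      simp only [hED] at this
      exact Fin.succAbove_right_injective this
    · rintro ⟨α, hα, hαi⟩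
      have hσ : (Equiv.swap i j * α) i = i := by
        rw [Equiv.Perm.mul_apply, hαi, Equiv.swap_apply_right]
      set σ := Equiv.swap i j * α with hσdef
      have hp : ∀ x : Fin (m+1), x ≠ i ↔ σ x ≠ i := by
        intro x
        constructor
        · intro hx h
          exact hx (σ.injective (h.trans hσ.symm))
        · intro hx h
          exact hx (h ▸ hσ)
      set β : Equiv.Perm (Fin m) := φ.symm.permCongr (σ.subtypePerm (fun x => (hp x).symm)) with hβ
      have hext : β.extendDomain φ = σ := by
        refine Equiv.ext fun x => ?_
        rcases eq_or_ne x i with rfl | hx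
        · rw [hEDi, hσ]
        · rw [Equiv.Perm.extendDomain_apply_subtype β φ hx]
          simp [hβ, Equiv.permCongr_apply, Equiv.Perm.subtypePerm_apply]
      refine ⟨⟨β, ?_⟩, ?_⟩
      · have := key β
        rw [hext, hσdef, ← mul_assoc, Equiv.swap_mul_self, one_mul] at this
        rw [← this, hα]
      · simp only [F, Subtype.mk.injEq]
        rw [hext, hσdef, ← mul_assoc, Equiv.swap_mul_self, one_mul]
  have := Nat.card_eq_of_bijective F hFbij
  rw [← this]
  simp only [c, Nat.add_sub_cancel]
  rfl
end

section
/- For 0 < k < n, p(n,k,0) ≤ p(n-1,k-1,0). -/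
open Equiv in
lemma c_eq (n k : ℕ) :
    c n k 0 = Fintype.card {σ : Equiv.Perm (Fin n) // ∀ i : Fin n, (i : ℕ) < k → σ i ≠ i} := by
  classical
  rw [c, Nat.card_eq_fintype_card]
  refine Fintype.card_congr (Equiv.subtypeEquivRight fun σ => ?_)
  rw [Finset.card_eq_zero, Finset.filter_eq_empty_iff]
  simp [not_and]

lemma c_zero (n : ℕ) : c n 0 0 = Nat.factorial n := by
  classical
  rw [c_eq]
  have h : ∀ σ : Equiv.Perm (Fin n), (∀ i : Fin n, (i : ℕ) < 0 → σ i ≠ i) := by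
    intro σ i hi; exact absurd hi (Nat.not_lt_zero _)
  rw [Fintype.card_congr (Equiv.subtypeUnivEquiv h)]
  simp [Fintype.card_perm, Fintype.card_fin]

open Equiv in
lemma card_fix (n k : ℕ) (p : Fin (n + 1)) (hp : (p : ℕ) = k) :
    Fintype.card {σ : Equiv.Perm (Fin (n + 1)) //
        (∀ i : Fin (n + 1), (i : ℕ) < k → σ i ≠ i) ∧ σ p = p}
      = Fintype.card {τ : Equiv.Perm (Fin n) // ∀ j : Fin n, (j : ℕ) < k → τ j ≠ j} := by
  classical
  set e := finSuccEquiv' p with he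
  have key : ∀ (σ : Perm (Fin (n + 1))), σ p = p →
      ∀ j : Fin n, σ (p.succAbove j)
        = p.succAbove (Equiv.removeNone (e.permCongr σ) j) := by
    intro σ hσ j
    have hEnone : e.permCongr σ none = none := by
      rw [permCongr_apply]
      rw [he, finSuccEquiv'_symm_none, hσ, finSuccEquiv'_at]
    have h1 : ∃ x', e.permCongr σ (some j) = some x' := by
      rcases hE : e.permCongr σ (some j) with _ | x
      · exact absurd ((e.permCongr σ).injective (hE.trans hEnone.symm)) (by simp)
      · exact ⟨x, rfl⟩
    have h2 := Equiv.removeNone_some (e.permCongr σ) h1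
    rw [permCongr_apply] at h2
    rw [he, finSuccEquiv'_symm_some] at h2
    have h3 := congrArg e.symm h2
    rw [Equiv.symm_apply_apply] at h3
    rw [he, finSuccEquiv'_symm_some] at h3
    exact h3.symm
  have inv_fix : ∀ (τ : Perm (Fin n)), (e.symm.permCongr τ.optionCongr) p = p := by
    intro τ
    rw [permCongr_apply, Equiv.symm_symm]
    rw [he, finSuccEquiv'_at]
    simp [finSuccEquiv'_symm_none]
  have inv_succ : ∀ (τ : Perm (Fin n)) (j : Fin n),
      (e.symm.permCongr τ.optionCongr) (p.succAbove j) = p.succAbove (τ j) := by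
    intro τ j
    rw [permCongr_apply, Equiv.symm_symm]
    rw [he, finSuccEquiv'_succAbove]
    simp [finSuccEquiv'_symm_some]
  have hcs : ∀ j : Fin n, (j : ℕ) < k → p.succAbove j = Fin.castSucc j := by
    intro j hj
    apply Fin.succAbove_of_castSucc_lt
    rw [Fin.lt_def]
    simpa [hp] using hj
  have hjlt : ∀ (i : Fin (n + 1)) (j : Fin n), p.succAbove j = i → (i : ℕ) < k → (j : ℕ) < k := by
    intro i j hj hi
    rcases lt_or_ge (Fin.castSucc j) p with h | h
    · rw [Fin.succAbove_of_castSucc_lt _ _ h] at hj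
      have : (j : ℕ) = (i : ℕ) := by rw [← hj]; simp
      omega
    · rw [Fin.succAbove_of_le_castSucc _ _ h] at hj
      have : (j : ℕ) + 1 = (i : ℕ) := by rw [← hj]; simp
      omega
  refine Fintype.card_congr ?_
  refine
    { toFun := fun σ => ⟨Equiv.removeNone (e.permCongr σ.1), ?_⟩
      invFun := fun τ => ⟨e.symm.permCongr τ.1.optionCongr, ?_, inv_fix τ.1⟩
      left_inv := ?_
      right_inv := ?_ }
  · intro j hj hcon
    have hk := key σ.1 σ.2.2 j
    rw [hcon] at hk
    refine σ.2.1 (p.succAbove j) ?_ hk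
    rw [hcs j hj]
    simpa using hj
  · intro i hi hcon
    have hip : i ≠ p := by
      intro h
      rw [h, hp] at hi
      omega
    obtain ⟨j, hj⟩ := Fin.exists_succAbove_eq hip
    have hjk : (j : ℕ) < k := hjlt i j hj hi
    have hne : τ.1 j ≠ j := τ.2 j hjk
    apply hne
    have := inv_succ τ.1 j
    rw [hj, hcon] at this
    exact Fin.succAbove_right_injective (this.symm.trans hj.symm)
  · rintro ⟨σ, hσ⟩
    apply Subtype.ext
    apply Equiv.ext
    intro i
    by_cases hi : i = p
    · subst hi
      rw [inv_fix, hσ.2]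
    · obtain ⟨j, hj⟩ := Fin.exists_succAbove_eq hi
      rw [← hj, inv_succ, ← key σ hσ.2 j]
  · rintro ⟨τ, hτ⟩
    apply Subtype.ext
    apply Equiv.ext
    intro j
    apply Fin.succAbove_right_injective (p := p)
    rw [← key _ (inv_fix τ) j, inv_succ]

open Equiv in
lemma LB (n k : ℕ) (hk : k ≤ n) : c (n + 1) k 0 = c (n + 1) (k + 1) 0 + c n k 0 := by
  classical
  rw [c_eq, c_eq, c_eq]
  have hkn : k < n + 1 := by omega
  set p : Fin (n + 1) := ⟨k, hkn⟩ with hpdef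
  rw [← card_fix n k p rfl]
  have split : Fintype.card {σ : Perm (Fin (n + 1)) // ∀ i : Fin (n + 1), (i : ℕ) < k → σ i ≠ i}
      = Fintype.card {σ : Perm (Fin (n + 1)) //
          (∀ i : Fin (n + 1), (i : ℕ) < k → σ i ≠ i) ∧ ¬ σ p = p}
        + Fintype.card {σ : Perm (Fin (n + 1)) //
          (∀ i : Fin (n + 1), (i : ℕ) < k → σ i ≠ i) ∧ σ p = p} := by
    rw [Fintype.card_subtype, Fintype.card_subtype, Fintype.card_subtype,
      ← Finset.filter_filter, ← Finset.filter_filter]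
    have := Finset.card_filter_add_card_filter_not
      (s := Finset.univ.filter fun σ : Perm (Fin (n + 1)) =>
        ∀ i : Fin (n + 1), (i : ℕ) < k → σ i ≠ i) (p := fun σ => σ p = p)
    omega
  rw [split]
  congr 1
  refine Fintype.card_congr (Equiv.subtypeEquivRight fun σ => ?_)
  constructor
  · rintro ⟨hA, hnp⟩ i hi
    rcases Nat.lt_or_ge (i : ℕ) k with h | h
    · exact hA i h
    · have hip : i = p := Fin.ext (by simp [hpdef]; omega)
      rw [hip]
      exact hnp
  · intro h
    exact ⟨fun i hi => h i (by omega), h p (by simpa [hpdef] using Nat.lt_succ_self k)⟩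

lemma cLE : ∀ k n : ℕ, k ≤ n →
    (c (n + 2) (k + 1) 0 : ℤ) + ((n : ℤ) + 1 - k) * (c n k 0)
      = ((n : ℤ) + 2) * (c (n + 1) k 0) := by
  intro k
  induction k with
  | zero =>
    intro n _
    have h := LB (n + 1) 0 (by omega)
    rw [show n + 1 + 1 = n + 2 from rfl] at h
    have h0 : c (n + 1) 0 0 = Nat.factorial (n + 1) := c_zero _
    have h2 : c (n + 2) 0 0 = Nat.factorial (n + 2) := c_zero _
    have h3 : c n 0 0 = Nat.factorial n := c_zero _
    have hZ : (c (n + 2) 1 0 : ℤ) + c (n + 1) 0 0 = c (n + 2) 0 0 := by exact_mod_cast h.symm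
    rw [h0, h2, h3] at *
    have f1 : (Nat.factorial (n + 1) : ℤ) = ((n : ℤ) + 1) * Nat.factorial n := by
      rw [Nat.factorial_succ]; push_cast; ring
    have f2 : (Nat.factorial (n + 2) : ℤ) = ((n : ℤ) + 2) * Nat.factorial (n + 1) := by
      rw [Nat.factorial_succ (n + 1)]; push_cast; ring
    push_cast
    linear_combination hZ + f2 - f1
  | succ k ih =>
    intro n hn
    obtain ⟨m, rfl⟩ : ∃ m, n = m + 1 := ⟨n - 1, by omega⟩
    have ih1 := ih (m + 1) (by omega)
    rw [show m + 1 + 2 = m + 3 from rfl, show m + 1 + 1 = m + 2 from rfl] at ih1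
    have ih0 := ih m (by omega)
    have lb1 := LB (m + 2) (k + 1) (by omega)
    have lb2 := LB (m + 1) k (by omega)
    have lb3 := LB m k (by omega)
    have Lb1 : (c (m + 3) (k + 1) 0 : ℤ) = c (m + 3) (k + 2) 0 + c (m + 2) (k + 1) 0 := by
      rw [show m + 3 = m + 2 + 1 from rfl, show k + 2 = k + 1 + 1 from rfl]
      exact_mod_cast lb1
    have Lb2 : (c (m + 2) k 0 : ℤ) = c (m + 2) (k + 1) 0 + c (m + 1) k 0 := by
      exact_mod_cast lb2
    have Lb3 : (c (m + 1) k 0 : ℤ) = c (m + 1) (k + 1) 0 + c m k 0 := by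
      exact_mod_cast lb3
    rw [show m + 1 + 2 = m + 3 from rfl, show m + 1 + 1 = m + 2 from rfl,
      show k + 1 + 1 = k + 2 from rfl]
    push_cast at ih1 ih0 ⊢
    linear_combination ih1 - Lb1 + ((m : ℤ) + 3) * Lb2 - ih0 - ((m : ℤ) + 1 - k) * Lb3

theorem stmt14 (n k : ℕ) (hk0 : 0 < k) (hk : k < n) :
    p n k 0 ≤ p (n - 1) (k - 1) 0 := by
  obtain ⟨j, rfl⟩ : ∃ j, k = j + 1 := ⟨k - 1, by omega⟩
  obtain ⟨m, rfl⟩ : ∃ m, n = m + 2 := ⟨n - 2, by omega⟩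
  have hj : j ≤ m := by omega
  have hle := cLE j m hj
  have hnn : (0 : ℤ) ≤ ((m : ℤ) + 1 - j) * c m j 0 := by
    apply mul_nonneg
    · have : (j : ℤ) ≤ m := by exact_mod_cast hj
      linarith
    · positivity
  have hc : (c (m + 2) (j + 1) 0 : ℤ) ≤ ((m : ℤ) + 2) * c (m + 1) j 0 := by linarith
  simp only [p, show m + 2 - 1 = m + 1 from rfl, show j + 1 - 1 = j from rfl]
  rw [div_le_div_iff₀ (by positivity) (by positivity)]
  have hfac : (Nat.factorial (m + 2) : ℝ) = ((m : ℝ) + 2) * Nat.factorial (m + 1) := by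
    rw [Nat.factorial_succ (m + 1)]; push_cast; ring
  have hcR : (c (m + 2) (j + 1) 0 : ℝ) ≤ ((m : ℝ) + 2) * c (m + 1) j 0 := by
    exact_mod_cast hc
  calc (c (m + 2) (j + 1) 0 : ℝ) * Nat.factorial (m + 1)
      ≤ (((m : ℝ) + 2) * c (m + 1) j 0) * Nat.factorial (m + 1) :=
        mul_le_mul_of_nonneg_right hcR (by positivity)
    _ = (c (m + 1) j 0 : ℝ) * Nat.factorial (m + 2) := by rw [hfac]; ring
end

section
/- For 0 < k < n and n ≥ 3, p(n,k+1,0)/p(n,k,0) = 1 - 1/n + (k/(n²(n-1)))·(p(n-2,k-1,0)/p(n,k,0)). -/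
/-! ### Auxiliary development -/

/-- The number of permutations of `Fin n` with no fixed points among the first `k` points. -/
def Dk (n k : ℕ) : ℕ :=
  (Finset.univ.filter (fun α : Equiv.Perm (Fin n) => ∀ i : Fin n, (i : ℕ) < k → α i ≠ i)).card

lemma c_eq_s17 (n k : ℕ) : c n k 0 = Dk n k := by
  rw [c, Dk, Nat.card_eq_fintype_card, Fintype.card_subtype]
  congr 1
  apply Finset.filter_congr
  intro α _
  rw [Finset.card_eq_zero, Finset.filter_eq_empty_iff]
  constructor
  · intro h i hi hfix
    exact h (Finset.mem_univ i) ⟨hi, hfix⟩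
  · intro h i _ ⟨hi, hfix⟩
    exact h i hi hfix

lemma Dk_zero (n : ℕ) : Dk n 0 = n.factorial := by
  rw [Dk]
  rw [Finset.filter_true_of_mem (by intro α _ i hi; omega)]
  simp [Finset.card_univ, Fintype.card_perm]

lemma Dk_pos (n k : ℕ) (hn : 2 ≤ n) : 0 < Dk n k := by
  obtain ⟨m, rfl⟩ : ∃ m, n = m + 2 := ⟨n - 2, by omega⟩
  apply Finset.card_pos.mpr
  refine ⟨finRotate (m + 2), Finset.mem_filter.mpr ⟨Finset.mem_univ _, ?_⟩⟩
  intro i _ h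
  rw [finRotate_succ_apply] at h
  have := congrArg Fin.val h
  rw [Fin.val_add_one] at this
  split_ifs at this with hl
  · have := congrArg Fin.val hl
    simp [Fin.val_last] at this
    omega
  · omega

lemma fin_val_sub_one {m : ℕ} (x : Fin (m + 2)) (hx : 0 < (x : ℕ)) :
    ((x - 1 : Fin (m + 2)) : ℕ) = (x : ℕ) - 1 := by
  rw [Fin.sub_def]
  simp only [Fin.val_one]
  have hx' : (x : ℕ) < m + 2 := x.isLt
  have h : (m + 2 - 1) + (x : ℕ) = ((x : ℕ) - 1) + (m + 2) := by omega
  show ((m + 2 - 1) + (x : ℕ)) % (m + 2) = (x : ℕ) - 1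
  rw [h, Nat.add_mod_right, Nat.mod_eq_of_lt (by omega)]

lemma fin_val_add_one' {m : ℕ} (x : Fin (m + 2)) (hx : (x : ℕ) + 1 < m + 2) :
    ((x + 1 : Fin (m + 2)) : ℕ) = (x : ℕ) + 1 := by
  rw [Fin.add_def]
  simp only [Fin.val_one]
  show ((x : ℕ) + 1) % (m + 2) = (x : ℕ) + 1
  rw [Nat.mod_eq_of_lt hx]

/-- The shift equivalence on `Fin (m+2)`. -/
def shiftE (m : ℕ) : Fin (m + 2) ≃ Fin (m + 2) where
  toFun x := x + 1
  invFun x := x - 1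
  left_inv x := by simp
  right_inv x := by simp

lemma sym (m k : ℕ) (hk : k + 1 ≤ m + 2) :
    Dk (m + 2) k =
      (Finset.univ.filter (fun α : Equiv.Perm (Fin (m + 2)) =>
        ∀ x : Fin (m + 2), 0 < (x : ℕ) ∧ (x : ℕ) < k + 1 → α x ≠ x)).card := by
  apply Finset.card_equiv (Equiv.permCongr (shiftE m))
  intro α
  simp only [Finset.mem_filter, Finset.mem_univ, true_and]
  have hc : ∀ x : Fin (m + 2),
      (Equiv.permCongr (shiftE m) α) x = α (x - 1) + 1 := by
    intro x
    rfl
  constructor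
  · intro H x ⟨hx0, hxk⟩
    rw [hc]
    intro hEq
    have h1 : α (x - 1) = x - 1 := by
      have := congrArg (fun y => y - 1) hEq
      simpa using this
    exact H (x - 1) (by rw [fin_val_sub_one x hx0]; omega) h1
  · intro H i hi
    have hik : (i : ℕ) + 1 < m + 2 := by omega
    have h0 := H (i + 1) (by rw [fin_val_add_one' i hik]; omega)
    rw [hc, add_sub_cancel_right] at h0
    intro hEq
    exact h0 (by rw [hEq])

lemma decomposeFin_fst {s : ℕ} (α : Equiv.Perm (Fin (s + 1))) :
    (Equiv.Perm.decomposeFin α).1 = α 0 := by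
  conv_rhs => rw [← Equiv.symm_apply_apply Equiv.Perm.decomposeFin α]
  rw [show Equiv.Perm.decomposeFin α =
    ((Equiv.Perm.decomposeFin α).1, (Equiv.Perm.decomposeFin α).2) from rfl]
  rw [Equiv.Perm.decomposeFin_symm_apply_zero]

lemma fix0 (s k : ℕ) :
    ((Finset.univ.filter (fun α : Equiv.Perm (Fin (s + 1)) =>
        ∀ x : Fin (s + 1), 0 < (x : ℕ) ∧ (x : ℕ) < k + 1 → α x ≠ x)).filter
      (fun α => α 0 = 0)).card = Dk s k := by
  rw [Finset.filter_filter, Dk]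
  apply Finset.card_nbij' (fun α => (Equiv.Perm.decomposeFin α).2)
    (fun e => Equiv.Perm.decomposeFin.symm (0, e))
  · intro α hα
    simp only [Finset.mem_coe, Finset.mem_filter, Finset.mem_univ, true_and] at hα ⊢
    obtain ⟨hQ, h0⟩ := hα
    intro i hi hfix
    have hsucc : α i.succ = ((Equiv.Perm.decomposeFin α).2 i).succ := by
      conv_lhs => rw [← Equiv.symm_apply_apply Equiv.Perm.decomposeFin α]
      rw [show Equiv.Perm.decomposeFin α =
        ((Equiv.Perm.decomposeFin α).1, (Equiv.Perm.decomposeFin α).2) from rfl]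
      rw [Equiv.Perm.decomposeFin_symm_apply_succ, decomposeFin_fst, h0, Equiv.swap_self]
      rfl
    refine hQ i.succ ⟨by simp [Fin.val_succ], by simp [Fin.val_succ]; omega⟩ ?_
    rw [hsucc, hfix]
  · intro e he
    simp only [Finset.mem_coe, Finset.mem_filter, Finset.mem_univ, true_and] at he ⊢
    constructor
    · intro x hx
      induction x using Fin.cases with
      | zero => simp at hx
      | succ i =>
        rw [Equiv.Perm.decomposeFin_symm_apply_succ, Equiv.swap_self]
        have h := he i (by simpa [Fin.val_succ] using hx.2)
        simpa [Fin.succ_inj] using h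
    · rw [Equiv.Perm.decomposeFin_symm_apply_zero]
  · intro α hα
    simp only [Finset.mem_coe, Finset.mem_filter, Finset.mem_univ, true_and] at hα
    rw [← hα.2, ← decomposeFin_fst]
    exact Equiv.symm_apply_apply _ _
  · intro e _
    dsimp only
    rw [Equiv.apply_symm_apply]

lemma Dk_one_one : Dk 1 1 = 0 := by
  rw [Dk]
  apply Finset.card_eq_zero.mpr
  apply Finset.filter_eq_empty_iff.mpr
  intro α _
  push_neg
  exact ⟨0, by norm_num, Subsingleton.elim _ _⟩

lemma R (m k : ℕ) (hk : k ≤ m) : Dk (m + 1) (k + 1) + Dk m k = Dk (m + 1) k := by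
  match m, hk with
  | 0, hk =>
    interval_cases k
    rw [Dk_one_one, Dk_zero, Dk_zero]
    decide
  | (s+1), hk =>
    rw [sym s k (by omega)]
    rw [← Finset.card_filter_add_card_filter_not (s := Finset.univ.filter _)
      (p := fun α : Equiv.Perm (Fin (s+2)) => α 0 = 0)]
    rw [Finset.filter_filter, Finset.filter_filter, add_comm (Dk (s + 1 + 1) (k + 1))]
    congr 1
    · rw [← fix0 (s + 1) k, Finset.filter_filter]
    · rw [Dk]
      apply congrArg
      apply Finset.filter_congr
      intro α _
      constructor
      · intro H
        constructor
        · intro x hx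
          exact H x (by omega)
        · have := H 0 (by simp)
          simpa using this
      · intro H x hx
        rcases Nat.eq_zero_or_pos (x : ℕ) with h0 | h0
        · have hx0 : x = 0 := Fin.ext h0
          rw [hx0]; exact H.2
        · exact H.1 x ⟨h0, by omega⟩

lemma T : ∀ k m : ℕ, k ≤ m →
    (Dk (m + 1) k : ℤ) = (m + 1) * Dk m k + k * Dk (m - 1) (k - 1) := by
  intro k
  induction k with
  | zero =>
    intro m _
    simp only [Dk_zero, Nat.factorial_succ, Nat.cast_zero, zero_mul, add_zero, Nat.cast_mul]
    push_cast
    ring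
  | succ k ih =>
    intro m hm
    obtain ⟨l, rfl⟩ : ∃ l, m = l + 1 := ⟨m - 1, by omega⟩
    have r1 := R (l + 1) k (by omega)
    have r2 := R l k (by omega)
    have r1' : (Dk (l + 2) (k + 1) : ℤ) + Dk (l + 1) k = Dk (l + 2) k := by exact_mod_cast r1
    have r2' : (Dk (l + 1) (k + 1) : ℤ) + Dk l k = Dk (l + 1) k := by exact_mod_cast r2
    have t1 := ih (l + 1) (by omega)
    have t2 := ih l (by omega)
    have hA5 : (k : ℤ) * Dk l (k - 1) = k * Dk (l - 1) (k - 1) + k * Dk l k := by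
      match k, hm with
      | 0, _ => simp
      | (j + 1), hm =>
        obtain ⟨t, rfl⟩ : ∃ t, l = t + 1 := ⟨l - 1, by omega⟩
        have r := R t j (by omega)
        have r' : (Dk (t + 1) (j + 1) : ℤ) + Dk t j = Dk (t + 1) j := by exact_mod_cast r
        simp only [Nat.add_sub_cancel]
        push_cast at r' ⊢
        linear_combination -((j : ℤ) + 1) * r'
    simp only [Nat.add_sub_cancel] at *
    push_cast at r1' r2' t1 t2 hA5 ⊢
    linear_combination r1' - ((l : ℤ) + 2) * r2' + t1 - t2 + hA5

lemma mainId (n k : ℕ) (hk0 : 0 < k) (hk : k < n) :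
    (n : ℤ) * Dk n (k + 1) = ((n : ℤ) - 1) * Dk n k + k * Dk (n - 2) (k - 1) := by
  obtain ⟨m, rfl⟩ : ∃ m, n = m + 1 := ⟨n - 1, by omega⟩
  have r := R m k (by omega)
  have r' : (Dk (m + 1) (k + 1) : ℤ) + Dk m k = Dk (m + 1) k := by exact_mod_cast r
  have t := T k m (by omega)
  have h2 : m + 1 - 2 = m - 1 := by omega
  rw [h2]
  push_cast at r' t ⊢
  linear_combination ((m : ℤ) + 1) * r' + t

theorem stmt17 (n k : ℕ) (hk0 : 0 < k) (hk : k < n) (hn : 3 ≤ n) :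
    p n (k + 1) 0 / p n k 0 =
      1 - 1 / (n : ℝ) +
        ((k : ℝ) / ((n : ℝ) ^ 2 * ((n : ℝ) - 1))) * (p (n - 2) (k - 1) 0 / p n k 0) := by
  obtain ⟨m, rfl⟩ : ∃ m, n = m + 3 := ⟨n - 3, by omega⟩
  obtain ⟨j, rfl⟩ : ∃ j, k = j + 1 := ⟨k - 1, by omega⟩
  have hid := mainId (m + 3) (j + 1) (by omega) (by omega)
  have h2 : m + 3 - 2 = m + 1 := by omega
  have h1 : j + 1 - 1 = j := by omega
  rw [h2, h1] at hid
  have hid2 : ((m : ℤ) + 3) * Dk (m + 3) (j + 1 + 1) =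
      ((m : ℤ) + 2) * Dk (m + 3) (j + 1) + ((j : ℤ) + 1) * Dk (m + 1) j := by
    push_cast at hid
    linear_combination hid
  have hidR : ((m : ℝ) + 3) * Dk (m + 3) (j + 1 + 1) =
      ((m : ℝ) + 2) * Dk (m + 3) (j + 1) + ((j : ℝ) + 1) * Dk (m + 1) j := by
    exact_mod_cast hid2
  have hB : (0 : ℝ) < Dk (m + 3) (j + 1) := by
    exact_mod_cast Dk_pos (m + 3) (j + 1) (by omega)
  have hBne : (Dk (m + 3) (j + 1) : ℝ) ≠ 0 := ne_of_gt hB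
  have hG : ((m + 1).factorial : ℝ) ≠ 0 := by
    exact_mod_cast (Nat.factorial_pos (m + 1)).ne'
  have ha : ((m : ℝ) + 3) ≠ 0 := by positivity
  have hb : ((m : ℝ) + 2) ≠ 0 := by positivity
  have hfac : ((m + 3).factorial : ℝ) =
      ((m : ℝ) + 3) * (((m : ℝ) + 2) * ((m + 1).factorial : ℝ)) := by
    rw [show m + 3 = (m + 2) + 1 from rfl, Nat.factorial_succ,
      show m + 2 = (m + 1) + 1 from rfl, Nat.factorial_succ]
    push_cast
    ring
  simp only [p, c_eq_s17, h2, h1]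
  rw [hfac]
  push_cast
  rw [show ((m : ℝ) + 3) - 1 = (m : ℝ) + 2 from by ring]
  field_simp
  linear_combination hidR
end

section
/- For n > 3 and 0 ≤ k < n, the conditional probability f(n,k,0) satisfies the two-sided bound 1/n - (k/(n²(n-1)))·(n/(n-1)) ≤ f(n,k,0) ≤ 1/n - (k/(n²(n-1)))·((n-3)/(n-2)). -/
set_option maxHeartbeats 1000000

open Finset Equiv

/-- The set of permutations of `Fin n` with no fixed point among the first `k` points. -/
def Dset (n k : ℕ) : Finset (Perm (Fin n)) :=
  univ.filter (fun σ => ∀ i : Fin n, (i : ℕ) < k → σ i ≠ i)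

def D (n k : ℕ) : ℕ := (Dset n k).card

lemma optionCongr_removeNone {α : Type*} [DecidableEq α] (ρ : Perm (Option α))
    (h : ρ none = none) : (Equiv.removeNone ρ).optionCongr = ρ := by
  rw [map_equiv_removeNone, h, Equiv.swap_self]
  ext x; simp


lemma c_eq_D (n k : ℕ) : c n k 0 = D n k := by
  rw [c, Nat.card_eq_fintype_card, Fintype.card_subtype, D, Dset]
  congr 1
  apply Finset.filter_congr
  intro σ _
  simp only [Finset.card_eq_zero, Finset.filter_eq_empty_iff, Finset.mem_univ, true_imp_iff]
  constructor
  · intro h i hi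
    have := h (x := i)
    tauto
  · intro h i
    push_neg
    exact h i


lemma D_zero (n : ℕ) : D n 0 = n.factorial := by
  simp [D, Dset, Fintype.card_perm]


lemma D_rec (m k : ℕ) (hk : k ≤ m) : D (m+1) k = D (m+1) (k+1) + D m k := by
  classical
  set K : Fin (m+1) := ⟨k, Nat.lt_succ_of_le hk⟩ with hK
  have hsplit : Dset (m+1) k =
      Dset (m+1) (k+1) ∪ (Dset (m+1) k).filter (fun σ => σ K = K) := by
    ext σ
    simp only [Dset, mem_filter, mem_union, mem_univ, true_and]
    constructor
    · intro h
      by_cases hfix : σ K = K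
      · exact Or.inr ⟨h, hfix⟩
      · left
        intro i hi
        rcases Nat.lt_succ_iff_lt_or_eq.mp hi with h' | h'
        · exact h i h'
        · have : i = K := Fin.ext h'
          rw [this]; exact hfix
    · rintro (h | ⟨h, _⟩)
      · exact fun i hi => h i (Nat.lt_succ_of_lt hi)
      · exact h
  have hdisj : Disjoint (Dset (m+1) (k+1)) ((Dset (m+1) k).filter (fun σ => σ K = K)) := by
    rw [Finset.disjoint_left]
    intro σ h1 h2
    simp only [Dset, mem_filter, mem_univ, true_and] at h1 h2
    exact h1 K (Nat.lt_succ_self k) h2.2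
  have hcard2 : ((Dset (m+1) k).filter (fun σ => σ K = K)).card = D m k := by
    rw [D]
    apply Finset.card_bij' (fun σ _ => Equiv.removeNone ((finSuccEquiv' K).permCongr σ))
      (fun τ _ => (finSuccEquiv' K).permCongr.symm τ.optionCongr)
    · -- forward maps into Dset m k
      intro σ hσ
      simp only [Dset, mem_filter, mem_univ, true_and] at hσ ⊢
      obtain ⟨hP, hfix⟩ := hσ
      set ρ : Perm (Option (Fin m)) := (finSuccEquiv' K).permCongr σ with hρ
      have hnone : ρ none = none := by
        simp [hρ, Equiv.permCongr_apply, finSuccEquiv'_symm_none, hfix, finSuccEquiv'_at]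
      have hrel : ∀ i : Fin m, σ (K.succAbove i) = K.succAbove (Equiv.removeNone ρ i) := by
        intro i
        have hex : ∃ x', ρ (some i) = some x' := by
          cases h' : ρ (some i) with
          | none => exact absurd (ρ.injective (h'.trans hnone.symm)) (by simp)
          | some x => exact ⟨x, rfl⟩
        have h2 : ρ (some i) = some (Equiv.removeNone ρ i) := (Equiv.removeNone_some ρ hex).symm
        have := congrArg (finSuccEquiv' K).symm h2
        simpa [hρ, Equiv.permCongr_apply, finSuccEquiv'_symm_some, finSuccEquiv'_succAbove]
          using this
      intro i hi
      have hcs : (Fin.castSucc i) < K := by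
        rw [Fin.lt_def]; simpa using hi
      have hsa : K.succAbove i = Fin.castSucc i := Fin.succAbove_of_castSucc_lt K i hcs
      intro hcontra
      apply hP (Fin.castSucc i) (by simpa using hi)
      rw [← hsa, hrel i, hcontra, hsa]
    · -- backward maps into filter set
      intro τ hτ
      simp only [Dset, mem_filter, mem_univ, true_and] at hτ ⊢
      set σ : Perm (Fin (m+1)) := (finSuccEquiv' K).permCongr.symm τ.optionCongr with hσdef
      have hfix : σ K = K := by
        simp [hσdef, Equiv.permCongr_apply, finSuccEquiv'_at, finSuccEquiv'_symm_none]
      have hrel : ∀ i : Fin m, σ (K.succAbove i) = K.succAbove (τ i) := by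
        intro i
        simp [hσdef, Equiv.permCongr_apply, finSuccEquiv'_succAbove, finSuccEquiv'_symm_some]
      refine ⟨?_, hfix⟩
      intro j hj
      have hjm : (j : ℕ) < m := lt_of_lt_of_le hj hk
      set i : Fin m := ⟨j, hjm⟩ with hi
      have hcs : (Fin.castSucc i) < K := by rw [Fin.lt_def]; simpa using hj
      have hji : j = K.succAbove i := by
        rw [Fin.succAbove_of_castSucc_lt K i hcs]
        exact Fin.ext rfl
      rw [hji, hrel i]
      intro hcontra
      have : τ i = i := Fin.succAbove_right_injective (p := K) hcontra
      exact hτ i (by simpa using hj) this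
    · -- left inverse
      intro σ hσ
      simp only [Dset, mem_filter, mem_univ, true_and] at hσ
      have hnone : ((finSuccEquiv' K).permCongr σ) none = none := by
        simp [Equiv.permCongr_apply, finSuccEquiv'_symm_none, hσ.2, finSuccEquiv'_at]
      have h1 : (Equiv.removeNone ((finSuccEquiv' K).permCongr σ)).optionCongr
          = (finSuccEquiv' K).permCongr σ := optionCongr_removeNone _ hnone
      rw [h1]
      exact Equiv.symm_apply_apply _ σ
    · -- right inverse
      intro τ hτ
      rw [Equiv.apply_symm_apply, Equiv.removeNone_optionCongr]
  rw [D, D, hsplit, Finset.card_union_of_disjoint hdisj, hcard2]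

lemma D_pos (m k : ℕ) : 0 < D (m+2) k := by
  rw [D]
  apply Finset.card_pos.mpr
  refine ⟨finRotate (m+2), ?_⟩
  simp only [Dset, mem_filter, mem_univ, true_and]
  intro i _ h
  rw [finRotate_succ_apply] at h
  have h1 : (1 : Fin (m+2)) = 0 := by
    have := add_eq_left.mp h
    exact this
  simp [Fin.ext_iff] at h1

attribute [irreducible] D

noncomputable def S (n k : ℕ) : ℤ :=
  ∑ j ∈ range (k+1), (-1:ℤ)^j * (k.choose j) * ((n - j).factorial)

lemma S_succ (m k : ℕ) : S (m+1) (k+1) + S m k = S (m+1) k := by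
  unfold S
  rw [Finset.sum_range_succ' (fun j => (-1:ℤ)^j * ((k+1).choose j) * ((m+1-j).factorial)) (k+1),
      Finset.sum_range_succ' (fun j => (-1:ℤ)^j * (k.choose j) * ((m+1-j).factorial)) k]
  have h1 : ∀ i ∈ range (k+1), (-1:ℤ)^(i+1) * ((k+1).choose (i+1)) * ((m+1-(i+1)).factorial)
      = -((-1:ℤ)^i * (k.choose i) * ((m-i).factorial))
        + -((-1:ℤ)^i * (k.choose (i+1)) * ((m-i).factorial)) := by
    intro i _
    rw [Nat.choose_succ_succ, Nat.succ_sub_succ]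
    push_cast
    ring
  rw [Finset.sum_congr rfl h1, Finset.sum_add_distrib]
  have h2 : ∀ i ∈ range k, (-1:ℤ)^(i+1) * (k.choose (i+1)) * ((m+1-(i+1)).factorial)
      = -((-1:ℤ)^i * (k.choose (i+1)) * ((m-i).factorial)) := by
    intro i _
    rw [Nat.succ_sub_succ]
    ring
  rw [Finset.sum_congr rfl h2]
  rw [Finset.sum_range_succ (fun i => -((-1:ℤ)^i * (k.choose (i+1)) * ((m-i).factorial))) k]
  simp only [Nat.choose_succ_self, Nat.cast_zero, mul_zero, zero_mul, neg_zero, add_zero,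
    Nat.sub_zero, pow_zero, one_mul, Nat.choose_zero_right, Nat.cast_one]
  push_cast
  rw [Finset.sum_neg_distrib, Finset.sum_neg_distrib]
  ring

lemma D_formula (k : ℕ) : ∀ n, k ≤ n → (D n k : ℤ) = S n k := by
  induction k with
  | zero => intro n _; simp [S, D_zero]
  | succ k ih =>
    intro n hn
    obtain ⟨m, rfl⟩ : ∃ m, n = m+1 := ⟨n-1, by omega⟩
    have hk : k ≤ m := by omega
    have hrec := D_rec m k hk
    have e1 := ih (m+1) (by omega)
    have e2 := ih m hk
    have e3 := S_succ m k
    have : (D (m+1) k : ℤ) = (D (m+1) (k+1) : ℤ) + (D m k : ℤ) := by exact_mod_cast hrec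
    linarith

lemma identI (m j : ℕ) (hj : j ≤ m) :
    (D (m+2) (j+1) : ℤ) = (m+2) * D (m+1) (j+1) + (j+1) * D m j := by
  rw [D_formula (j+1) (m+2) (by omega), D_formula (j+1) (m+1) (by omega),
      D_formula j m hj]
  rw [← sub_eq_iff_eq_add']
  unfold S
  rw [Finset.mul_sum, ← Finset.sum_sub_distrib]
  have h1 : ∀ i ∈ range (j+1+1), (-1:ℤ)^i * ((j+1).choose i) * ((m+2-i).factorial)
      - (m+2) * ((-1:ℤ)^i * ((j+1).choose i) * ((m+1-i).factorial))
      = (-1:ℤ)^(i+1) * i * ((j+1).choose i) * ((m+1-i).factorial) := by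
    intro i hi
    rw [mem_range] at hi
    have hile : i ≤ m+1 := by omega
    have hfact : (m+2-i).factorial = (m+2-i) * (m+1-i).factorial := by
      have : m+2-i = (m+1-i)+1 := by omega
      rw [this, Nat.factorial_succ]
    rw [hfact]
    have hcast : ((m+2-i : ℕ) : ℤ) = (m:ℤ)+2-i := by
      have : (i:ℤ) ≤ (m:ℤ)+2 := by exact_mod_cast Nat.le_of_lt (by omega)
      push_cast [Nat.cast_sub (by omega : i ≤ m+2)]
      ring
    push_cast [hcast]
    ring
  rw [Finset.sum_congr rfl h1]
  rw [Finset.sum_range_succ'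
    (fun i => (-1:ℤ)^(i+1) * i * ((j+1).choose i) * ((m+1-i).factorial)) (j+1)]
  have h2 : ∀ t ∈ range (j+1), (-1:ℤ)^(t+1+1) * ((t+1 : ℕ) : ℤ) * ((j+1).choose (t+1)) * ((m+1-(t+1)).factorial)
      = ((j:ℤ)+1) * ((-1:ℤ)^t * (j.choose t) * ((m-t).factorial)) := by
    intro t _
    have hch : (j+1) * (j.choose t) = ((j+1).choose (t+1)) * (t+1) := by
      exact_mod_cast Nat.add_one_mul_choose_eq j t
    have hch' : ((j:ℤ)+1) * (j.choose t) = ((j+1).choose (t+1) : ℤ) * (t+1) := by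
      exact_mod_cast hch
    rw [Nat.succ_sub_succ]
    push_cast
    linear_combination (-(-1:ℤ)^t * ((m-t).factorial : ℤ)) * hch'
  rw [Finset.sum_congr rfl h2, ← Finset.mul_sum]
  simp

lemma lemMul (m j : ℕ) (hj : j ≤ m+1) : ((m:ℤ)+2) * D (m+1) j ≤ (D (m+2) j : ℤ) := by
  cases j with
  | zero =>
    rw [D_zero, D_zero]
    have h : (m+2).factorial = (m+2) * (m+1).factorial := by
      rw [← Nat.factorial_succ]
    have h' : ((m+2).factorial : ℤ) = ((m:ℤ)+2) * ((m+1).factorial : ℤ) := by exact_mod_cast h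
    rw [h']
  | succ i =>
    have h := identI m i (by omega)
    have hpos : (0:ℤ) ≤ ((i:ℤ)+1) * D m i := by positivity
    push_cast at h
    linarith

lemma claimA (m j : ℕ) (hj : j ≤ m+1) :
    ((m:ℤ)+1) * D (m+1) j ≤ (D (m+2) (j+1) : ℤ) := by
  have hr : D (m+2) j = D (m+2) (j+1) + D (m+1) j := D_rec (m+1) j hj
  have hr' : (D (m+2) j : ℤ) = (D (m+2) (j+1) : ℤ) + (D (m+1) j : ℤ) := by exact_mod_cast hr
  have hm := lemMul m j hj
  linarith

lemma boundU (a b : ℕ) (hb : b ≤ a+2) :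
    ((a:ℤ)+3)^2 * D (a+2) b ≤ (D (a+4) (b+1) : ℤ) := by
  have hA : ((a:ℤ)+3) * D (a+3) b ≤ (D (a+4) (b+1) : ℤ) := by
    have := claimA (a+2) b (by omega); push_cast at this ⊢; linarith
  have hM : ((a:ℤ)+3) * D (a+2) b ≤ (D (a+3) b : ℤ) := by
    have := lemMul (a+1) b (by omega); push_cast at this ⊢; linarith
  nlinarith [hM, hA, (by positivity : (0:ℤ) ≤ (a:ℤ)+3)]

lemma boundL (a b : ℕ) (hb : b ≤ a+2) :
    ((a:ℤ)+1) * D (a+4) (b+1) ≤ ((a:ℤ)+4)*((a:ℤ)+3)*((a:ℤ)+2) * D (a+2) b := by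
  cases b with
  | zero =>
    have h1 : D (a+4) 0 = D (a+4) 1 + D (a+3) 0 := D_rec (a+3) 0 (by omega)
    rw [D_zero, D_zero] at h1
    have h2 : (a+4).factorial = (a+4) * ((a+3) * (a+2).factorial) := by
      rw [← Nat.factorial_succ, ← Nat.factorial_succ]
    have h3 : (a+3).factorial = (a+3) * (a+2).factorial := by rw [← Nat.factorial_succ]
    have h4 : D (a+4) 1 = (a+3) * ((a+3) * (a+2).factorial) := by
      have := Nat.factorial_pos (a+2)
      nlinarith [h1, h2, h3]
    have h4' : (D (a+4) 1 : ℤ) = ((a:ℤ)+3) * (((a:ℤ)+3) * ((a+2).factorial : ℤ)) := by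
      exact_mod_cast h4
    have h0' : (D (a+2) 0 : ℤ) = ((a+2).factorial : ℤ) := by exact_mod_cast D_zero (a+2)
    have hf : (0:ℤ) ≤ ((a+2).factorial : ℤ) := by positivity
    rw [h4', h0']
    nlinarith [hf]
  | succ t =>
    have ht : t ≤ a+1 := by omega
    have h1 : (D (a+2) t : ℤ) = ((D (a+2) (t+1) : ℕ) : ℤ) + ((D (a+1) t : ℕ) : ℤ) := by
      have h : D (a+2) t = D (a+2) (t+1) + D (a+1) t := D_rec (a+1) t ht
      exact_mod_cast h
    have h2 : (D (a+3) (t+1) : ℤ) = ((a:ℤ)+3)*((D (a+2) (t+1) : ℕ) : ℤ) + ((t:ℤ)+1)*((D (a+1) t : ℕ) : ℤ) := by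
      have := identI (a+1) t ht
      push_cast at this ⊢
      linarith
    have hr : (D (a+4) (t+1) : ℤ) = (D (a+4) (t+2) : ℤ) + (D (a+3) (t+1) : ℤ) := by
      have h : D (a+4) (t+1) = D (a+4) (t+2) + D (a+3) (t+1) := D_rec (a+3) (t+1) (by omega)
      exact_mod_cast h
    have hi : (D (a+4) (t+1) : ℤ) = ((a:ℤ)+4) * D (a+3) (t+1) + ((t:ℤ)+1) * D (a+2) t := by
      have := identI (a+2) t (by omega)
      push_cast at this ⊢
      linarith
    have h3 : (D (a+4) (t+2) : ℤ)
        = (((a:ℤ)+3)*((a:ℤ)+3)+((t:ℤ)+1))*((D (a+2) (t+1) : ℕ) : ℤ) + ((t:ℤ)+1)*((a:ℤ)+4)*((D (a+1) t : ℕ) : ℤ) := by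
      rw [hr, h2, h1] at hi
      linarith
    have hA : ((a:ℤ)+1) * ((D (a+1) t : ℕ) : ℤ) ≤ ((D (a+2) (t+1) : ℕ) : ℤ) := by
      have := claimA a t (by omega)
      push_cast at this ⊢
      linarith
    have hYpos : (0:ℤ) ≤ ((D (a+1) t : ℕ) : ℤ) := by positivity
    have hXpos : (0:ℤ) ≤ ((D (a+2) (t+1) : ℕ) : ℤ) := by positivity
    have htc : (t:ℤ)+1 ≤ (a:ℤ)+2 := by exact_mod_cast (by omega : t+1 ≤ a+2)
    rw [h3]
    have hint1 : ((t:ℤ)+1)*((a:ℤ)+4)*(((a:ℤ)+1)*((D (a+1) t : ℕ) : ℤ)) ≤ ((t:ℤ)+1)*((a:ℤ)+4)*((D (a+2) (t+1) : ℕ) : ℤ) :=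
      mul_le_mul_of_nonneg_left hA (by positivity)
    have hint2 : ((t:ℤ)+1)*(((a:ℤ)+4)*((D (a+2) (t+1) : ℕ) : ℤ)) ≤ ((a:ℤ)+2)*(((a:ℤ)+4)*((D (a+2) (t+1) : ℕ) : ℤ)) :=
      mul_le_mul_of_nonneg_right htc (by positivity)
    have hint3 : ((t:ℤ)+1)*(((a:ℤ)+1)*((D (a+2) (t+1) : ℕ) : ℤ)) ≤ ((a:ℤ)+2)*(((a:ℤ)+1)*((D (a+2) (t+1) : ℕ) : ℤ)) :=
      mul_le_mul_of_nonneg_right htc (by positivity)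
    nlinarith [hint1, hint2, hint3, mul_nonneg (by positivity : (0:ℤ) ≤ 2*(a:ℤ)+5) hXpos]

theorem stmt18 (n k : ℕ) (hn : 3 < n) (hk : k < n) :
    1 / (n : ℝ) - ((k : ℝ) / ((n : ℝ) ^ 2 * ((n : ℝ) - 1))) * ((n : ℝ) / ((n : ℝ) - 1))
        ≤ f n k 0 ∧
    f n k 0 ≤
      1 / (n : ℝ) - ((k : ℝ) / ((n : ℝ) ^ 2 * ((n : ℝ) - 1))) * (((n : ℝ) - 3) / ((n : ℝ) - 2)) := by
  obtain ⟨a, rfl⟩ : ∃ a, n = a+4 := ⟨n-4, by omega⟩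
  have hfs : f (a+4) k 0 = (D (a+3) k : ℝ) / (D (a+4) k : ℝ) := by
    rw [f, show a+4-1 = a+3 from rfl, c_eq_D, c_eq_D]
  have hApos : (0:ℝ) < (D (a+4) k : ℝ) := by
    exact_mod_cast D_pos (a+2) k
  have hn4 : ((a+4 : ℕ) : ℝ) = (a:ℝ)+4 := by push_cast; ring
  rcases Nat.eq_zero_or_pos k with hk0 | hkpos
  · subst hk0
    have hfval : f (a+4) 0 0 = 1 / ((a:ℝ)+4) := by
      rw [hfs, D_zero, D_zero]
      rw [show (a+4).factorial = (a+4) * (a+3).factorial from by rw [← Nat.factorial_succ]]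
      have h3 : (0:ℝ) < ((a+3).factorial : ℝ) := by positivity
      push_cast
      rw [div_eq_div_iff (by positivity : ((0:ℝ) < _)).ne' (by positivity : ((0:ℝ) < _)).ne']
      ring
    rw [hfval, hn4]
    norm_num
  · obtain ⟨b, rfl⟩ : ∃ b, k = b+1 := ⟨k-1, by omega⟩
    have hb : b ≤ a+2 := by omega
    have hApos' : (0:ℝ) < ((D (a+4) (b+1) : ℕ) : ℝ) := hApos
    have hCpos : (0:ℝ) <((D (a+2) b : ℕ) : ℝ) := by exact_mod_cast D_pos a b
    have hBpos : (0:ℝ) ≤((D (a+3) (b+1) : ℕ) : ℝ) := by positivity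
    have hI : ((D (a+4) (b+1) : ℕ) : ℝ) = ((a:ℝ)+4) *((D (a+3) (b+1) : ℕ) : ℝ) + ((b:ℝ)+1) *((D (a+2) b : ℕ) : ℝ) := by
      have := identI (a+2) b hb
      have h' : ((D (a+4) (b+1) : ℕ) : ℝ) = ((a:ℝ)+4) * ((D (a+3) (b+1) : ℕ) : ℝ)
          + ((b:ℝ)+1) * ((D (a+2) b : ℕ) : ℝ) := by exact_mod_cast this
      exact h'
    have hU : ((a:ℝ)+3)^2 *((D (a+2) b : ℕ) : ℝ) ≤ ((D (a+4) (b+1) : ℕ) : ℝ) := by exact_mod_cast boundU a b hb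
    have hL : ((a:ℝ)+1) * ((D (a+4) (b+1) : ℕ) : ℝ) ≤ ((a:ℝ)+4)*((a:ℝ)+3)*((a:ℝ)+2) *((D (a+2) b : ℕ) : ℝ) := by
      exact_mod_cast boundL a b hb
    have hkey : f (a+4) (b+1) 0 = 1/((a:ℝ)+4) - (((b:ℝ)+1) *((D (a+2) b : ℕ) : ℝ))/(((a:ℝ)+4) * ((D (a+4) (b+1) : ℕ) : ℝ)) := by
      rw [hfs]
      rw [div_sub_div _ _ (by positivity) (by positivity), div_eq_div_iff hApos.ne' (by positivity)]
      rw [hI]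
      ring
    rw [hkey, hn4]
    have hkcast : ((b+1 : ℕ) : ℝ) = (b:ℝ)+1 := by push_cast; ring
    rw [hkcast]
    rw [show ((a:ℝ)+4)-1 = (a:ℝ)+3 from by ring, show ((a:ℝ)+4)-2 = (a:ℝ)+2 from by ring,
        show ((a:ℝ)+4)-3 = (a:ℝ)+1 from by ring]
    constructor
    · apply sub_le_sub_left
      rw [div_mul_div_comm, div_le_div_iff₀ (by positivity) (by positivity)]
      nlinarith [mul_le_mul_of_nonneg_left hU (by positivity : (0:ℝ) ≤ ((b:ℝ)+1) * ((a:ℝ)+4)),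
        hCpos.le, hApos'.le]
    · apply sub_le_sub_left
      rw [div_mul_div_comm, div_le_div_iff₀ (by positivity) (by positivity)]
      nlinarith [mul_le_mul_of_nonneg_left hL (by positivity : (0:ℝ) ≤ ((b:ℝ)+1)),
        hCpos.le, hApos'.le]
end
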